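/- Let a and b be real numbers with 0 < a < b. Then the function λ ↦ (e^{λb} − 1)/(e^{λa} − 1) is strictly increasing on (0, ∞). -/

import Mathlib

open Real Set

/-- Auxiliary: `t ↦ t e^t/(e^t - 1)` is strictly increasing on `(0, ∞)`. -/
theorem aux_phi_strictMono :
    StrictMonoOn (fun t : ℝ => t * Real.exp t / (Real.exp t - 1)) (Set.Ioi 0) := by
  apply strictMonoOn_of_deriv_pos (convex_Ioi 0)
  · apply ContinuousOn.div
    · exact (continuous_id.mul Real.continuous_exp).continuousOn
    · exact (Real.continuous_exp.sub continuous_const).continuousOn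
    · intro t ht
      have h1 : t + 1 < Real.exp t := Real.add_one_lt_exp (ne_of_gt (mem_Ioi.mp ht))
      have := mem_Ioi.mp ht
      nlinarith
  · intro t ht
    rw [interior_Ioi] at ht
    have ht' := mem_Ioi.mp ht
    have h1 : t + 1 < Real.exp t := Real.add_one_lt_exp (ne_of_gt ht')
    have hv : (0:ℝ) < Real.exp t - 1 := by linarith
    have hu : HasDerivAt (fun t : ℝ => t * Real.exp t) (Real.exp t + t * Real.exp t) t := by
      have := (hasDerivAt_id t).fun_mul (Real.hasDerivAt_exp t)
      simpa [mul_comm, add_comm] using this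
    have hd : HasDerivAt (fun t : ℝ => t * Real.exp t / (Real.exp t - 1))
        (((Real.exp t + t * Real.exp t) * (Real.exp t - 1)
          - t * Real.exp t * Real.exp t) / (Real.exp t - 1)^2) t :=
      hu.div ((Real.hasDerivAt_exp t).sub_const 1) (ne_of_gt hv)
    rw [hd.deriv]
    apply div_pos
    · nlinarith [Real.exp_pos t]
    · positivity

/-- For `0 < a < b`, the function `λ ↦ (e^{λb} - 1)/(e^{λa} - 1)` is strictly
increasing on `(0, ∞)`. -/
theorem strictMonoOn_exp_ratio (a b : ℝ) (ha : 0 < a) (hab : a < b) :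
    StrictMonoOn (fun l : ℝ => (Real.exp (l * b) - 1) / (Real.exp (l * a) - 1))
      (Set.Ioi (0 : ℝ)) := by
  apply strictMonoOn_of_deriv_pos (convex_Ioi 0)
  · apply ContinuousOn.div
    · exact ((Real.continuous_exp.comp (continuous_id.mul continuous_const)).sub
        continuous_const).continuousOn
    · exact ((Real.continuous_exp.comp (continuous_id.mul continuous_const)).sub
        continuous_const).continuousOn
    · intro l hl
      have hl' := mem_Ioi.mp hl
      have h1 : l * a + 1 < Real.exp (l * a) :=
        Real.add_one_lt_exp (ne_of_gt (mul_pos hl' ha))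
      nlinarith [mul_pos hl' ha]
  · intro l hl
    rw [interior_Ioi] at hl
    have hl' := mem_Ioi.mp hl
    have hsa : 0 < l * a := mul_pos hl' ha
    have hsb : 0 < l * b := mul_pos hl' (ha.trans hab)
    have hab' : l * a < l * b := by nlinarith
    have hva : (0:ℝ) < Real.exp (l * a) - 1 := by
      have := Real.add_one_lt_exp (ne_of_gt hsa); linarith
    have hvb : (0:ℝ) < Real.exp (l * b) - 1 := by
      have := Real.add_one_lt_exp (ne_of_gt hsb); linarith
    have hub : HasDerivAt (fun l : ℝ => Real.exp (l * b) - 1) (Real.exp (l * b) * b) l := by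
      have := ((hasDerivAt_id l).mul_const b).exp
      simpa using this.sub_const 1
    have hua : HasDerivAt (fun l : ℝ => Real.exp (l * a) - 1) (Real.exp (l * a) * a) l := by
      have := ((hasDerivAt_id l).mul_const a).exp
      simpa using this.sub_const 1
    have hd : HasDerivAt (fun l : ℝ => (Real.exp (l * b) - 1) / (Real.exp (l * a) - 1))
        ((Real.exp (l * b) * b * (Real.exp (l * a) - 1)
          - (Real.exp (l * b) - 1) * (Real.exp (l * a) * a)) / (Real.exp (l * a) - 1)^2) l :=
      hub.div hua (ne_of_gt hva)
    rw [hd.deriv]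
    apply div_pos
    · -- use the auxiliary strict monotonicity of φ
      have hphi := aux_phi_strictMono (mem_Ioi.mpr hsa) (mem_Ioi.mpr hsb) hab'
      simp only at hphi
      rw [div_lt_div_iff₀ hva hvb] at hphi
      -- hphi : l*a*exp(l*a)*(exp(l*b)-1) < l*b*exp(l*b)*(exp(l*a)-1)
      nlinarith [hphi]
    · positivity
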